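/- There exists an absolute constant C > 0 such that for every odd prime p there is a real constant c_p with the property that for every real N ≥ 2, the number of positive integers n ≤ N with τ(n) ≡ 0 (mod p) equals c_p·N up to an error of at most C·N/(log N). -/

import Mathlib

open scoped Classical

/-- Number of divisors of `n`. -/
noncomputable def tdiv (n : ℕ) : ℕ := n.divisors.card

open ArithmeticFunction Finset
open scoped ArithmeticFunction.zeta

/-- indicator of p ∤ τ(n) -/
noncomputable def fA (p : ℕ) : ArithmeticFunction ℤ :=
  ⟨fun n => if p ∣ tdiv n then 0 else 1, by simp [tdiv]⟩

lemma fA_apply (p n : ℕ) : fA p n = if p ∣ tdiv n then 0 else 1 := rfl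

lemma fA_mult {p : ℕ} (hp : p.Prime) : (fA p).IsMultiplicative := by
  rw [ArithmeticFunction.IsMultiplicative.iff_ne_zero]
  constructor
  · simp [fA_apply, tdiv, hp.one_lt.ne', Nat.dvd_one]
  · intro m n hm hn hmn
    have hτ : tdiv (m * n) = tdiv m * tdiv n := by
      have := (isMultiplicative_sigma (k := 0)).2 hmn
      simpa [sigma_zero_apply, tdiv] using this
    simp only [fA_apply, hτ, hp.dvd_mul]
    by_cases h1 : p ∣ tdiv m <;> by_cases h2 : p ∣ tdiv n <;> simp [h1, h2]

noncomputable def hA (p : ℕ) : ArithmeticFunction ℤ := fA p * moebius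

lemma hA_mult {p : ℕ} (hp : p.Prime) : (hA p).IsMultiplicative :=
  (fA_mult hp).mul isMultiplicative_moebius

lemma sum_divisors_hA {p : ℕ} (n : ℕ) : ∑ d ∈ n.divisors, hA p d = fA p n := by
  have : (hA p * ζ : ArithmeticFunction ℤ) = fA p := by
    rw [hA, mul_assoc, moebius_mul_coe_zeta, mul_one]
  calc ∑ d ∈ n.divisors, hA p d = (hA p * ζ) n := (coe_mul_zeta_apply).symm
  _ = fA p n := by rw [this]

lemma hA_prime_pow {p q k : ℕ} (hq : q.Prime) (hk : 1 ≤ k) :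
    hA p (q ^ k) = fA p (q ^ k) - fA p (q ^ (k - 1)) := by
  obtain ⟨k, rfl⟩ := Nat.exists_eq_add_of_le hk
  have h1 : ∀ m : ℕ, fA p (q ^ m) = ∑ i ∈ Finset.range (m + 1), hA p (q ^ i) := by
    intro m
    rw [← sum_divisors_hA (p := p) (q ^ m), Nat.sum_divisors_prime_pow hq]
  have h2 := h1 (1 + k)
  rw [Finset.sum_range_succ] at h2
  have h3 := h1 (1 + k - 1)
  have hk1 : 1 + k - 1 + 1 = 1 + k := by omega
  rw [hk1] at h3
  rw [h2, h3]
  ring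

lemma tdiv_prime_pow {q k : ℕ} (hq : q.Prime) : tdiv (q ^ k) = k + 1 := by
  have := sigma_zero_apply_prime_pow (i := k) hq
  rw [sigma_zero_apply] at this
  simpa [tdiv] using this

lemma fA_zero_or_one (p n : ℕ) : fA p n = 0 ∨ fA p n = 1 := by
  rw [fA_apply]; split <;> simp

lemma hA_prime {p q : ℕ} (hp : p.Prime) (hodd : Odd p) (hq : q.Prime) :
    hA p q = 0 := by
  have h2 : ¬ p ∣ 2 := by
    intro h
    have := (Nat.prime_dvd_prime_iff_eq hp Nat.prime_two).mp h
    rw [this] at hodd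
    exact (Nat.not_odd_iff_even.mpr even_two) hodd
  have htd : tdiv q = 2 := by
    have := tdiv_prime_pow (k := 1) hq
    simpa using this
  have h1 : ¬ p ∣ tdiv 1 := by
    simp [tdiv, Nat.dvd_one, hp.one_lt.ne']
  have := hA_prime_pow (p := p) (k := 1) hq le_rfl
  simpa [fA_apply, htd, h1, h2] using this

lemma abs_hA_prime_pow_le {p q k : ℕ} (hq : q.Prime) : |hA p (q ^ k)| ≤ 1 := by
  rcases Nat.eq_zero_or_pos k with rfl | hk
  · rw [pow_zero]
    rw [show (1 : ℕ) = 1 * 1 from rfl, hA, ArithmeticFunction.mul_apply]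
    simp [fA_apply, tdiv]
    split <;> norm_num
  · rw [hA_prime_pow hq hk]
    rcases fA_zero_or_one p (q ^ k) with h1 | h1 <;>
      rcases fA_zero_or_one p (q ^ (k - 1)) with h2 | h2 <;> simp [h1, h2]

lemma abs_hA_le {p : ℕ} (hp : p.Prime) (n : ℕ) (hn : n ≠ 0) : |hA p n| ≤ 1 := by
  rw [(hA_mult hp).multiplicative_factorization _ hn, Finsupp.prod, Finset.abs_prod]
  apply Finset.prod_le_one
  · intro q _; exact abs_nonneg _
  · intro q hq
    exact abs_hA_prime_pow_le (Nat.prime_of_mem_primeFactors (by simpa using hq))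

lemma hA_ne_zero_powerful {p : ℕ} (hp : p.Prime) (hodd : Odd p) {n : ℕ} (hn : n ≠ 0)
    (h : hA p n ≠ 0) {q : ℕ} (hq : q.Prime) (hqn : q ∣ n) : 2 ≤ n.factorization q := by
  by_contra hlt
  push_neg at hlt
  have h1 : n.factorization q = 1 := by
    have : 1 ≤ n.factorization q := (Nat.Prime.factorization_pos_of_dvd hq hn hqn)
    omega
  apply h
  rw [(hA_mult hp).multiplicative_factorization _ hn, Finsupp.prod]
  apply Finset.prod_eq_zero (i := q)
  · rw [Nat.support_factorization]
    exact Nat.mem_primeFactors.mpr ⟨hq, hqn, hn⟩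
  · rw [h1, pow_one]
    exact hA_prime hp hodd hq

lemma powerful_decomp {n : ℕ} (hn : n ≠ 0)
    (hpow : ∀ q : ℕ, q.Prime → q ∣ n → 2 ≤ n.factorization q) :
    ∃ k t : ℕ, k ≠ 0 ∧ t ≠ 0 ∧ n = k ^ 2 * t ^ 3 := by
  obtain ⟨a, b, hab, ha⟩ := Nat.sq_mul_squarefree n
  have ha0 : a ≠ 0 := ha.ne_zero
  have hb0 : b ≠ 0 := by rintro rfl; simp at hab; omega
  -- a ∣ b
  have hadvd : a ∣ b := by
    rw [← Nat.factorization_le_iff_dvd ha0 hb0]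
    intro q
    rcases Nat.eq_zero_or_pos (a.factorization q) with h0 | h0
    · simp [h0]
    have hmem : q ∈ a.primeFactors := by
      rw [← Nat.support_factorization]; exact Finsupp.mem_support_iff.mpr h0.ne'
    have hq : q.Prime := Nat.prime_of_mem_primeFactors hmem
    have hqa : q ∣ a := Nat.dvd_of_mem_primeFactors hmem
    have ha1 : a.factorization q = 1 := by
      have := (Nat.squarefree_iff_factorization_le_one ha0).mp ha q
      omega
    have hqn : q ∣ n := hab ▸ hqa.mul_left _
    have h2 := hpow q hq hqn
    have hfn : n.factorization q = 2 * b.factorization q + 1 := by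
      rw [← hab, Nat.factorization_mul (by positivity) ha0, pow_two,
        Nat.factorization_mul hb0 hb0]
      simp [ha1]; ring
    have : 1 ≤ b.factorization q := by omega
    simpa [ha1] using this
  obtain ⟨k, rfl⟩ := hadvd
  exact ⟨k, a, by rintro rfl; simp at hb0, ha0, by rw [← hab]; ring⟩

noncomputable def w (k : ℕ) : ℝ := 1 / (k * Real.sqrt k)

lemma w_nonneg (k : ℕ) : 0 ≤ w k := by
  unfold w; positivity

lemma sum_w_le (K : ℕ) : ∑ k ∈ Finset.Icc 1 K, w k ≤ 3 := by
  have key : ∀ K : ℕ, 1 ≤ K → ∑ k ∈ Finset.Icc 1 K, w k ≤ 3 - 2 / Real.sqrt K := by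
    intro K hK
    induction K with
    | zero => omega
    | succ n ih =>
      rcases Nat.eq_zero_or_pos n with rfl | hn
      · norm_num [w]
      · rw [← Finset.Ico_add_one_right_eq_Icc, Finset.sum_Ico_succ_top (by omega), Finset.Ico_add_one_right_eq_Icc]
        have h1 := ih hn
        have hs : (0:ℝ) < Real.sqrt n := Real.sqrt_pos.mpr (by exact_mod_cast hn)
        have hs1 : (0:ℝ) < Real.sqrt (n+1) := Real.sqrt_pos.mpr (by positivity)
        have hle : Real.sqrt n ≤ Real.sqrt (n+1) := Real.sqrt_le_sqrt (by push_cast; linarith)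
        have key2 : w (n+1) ≤ 2 / Real.sqrt n - 2 / Real.sqrt (n+1) := by
          set a := Real.sqrt n with ha
          set b := Real.sqrt (n+1) with hb
          have ha2 : a^2 = (n:ℝ) := Real.sq_sqrt (Nat.cast_nonneg n)
          have hb2 : b^2 = (n:ℝ)+1 := Real.sq_sqrt (by positivity)
          have hba : (b - a) * (b + a) = 1 := by nlinarith
          have hw : w (n+1) = 1 / (b^2 * b) := by
            have hc : ((n+1:ℕ):ℝ) = (n:ℝ)+1 := by push_cast; ring
            rw [w, hc, show Real.sqrt ((n:ℝ)+1) = b from rfl, ← hb2]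
          rw [hw, div_sub_div _ _ (ne_of_gt hs) (ne_of_gt hs1),
            div_le_div_iff₀ (by positivity) (by positivity)]
          nlinarith [hba, mul_pos hs hs1, add_pos hs hs1, sq_nonneg (b-a),
            mul_pos (mul_pos hs1 hs1) hs1]
        push_cast at *
        linarith
  rcases Nat.eq_zero_or_pos K with rfl | hK
  · simp
  · have := key K hK
    have : 0 ≤ 2 / Real.sqrt K := by positivity
    linarith [key K hK]

noncomputable def Qr (x : ℝ) : ℝ := Real.sqrt (x * Real.sqrt x)

lemma Qr_nonneg (x : ℝ) : 0 ≤ Qr x := Real.sqrt_nonneg _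

lemma Qr_mono {x y : ℝ} (hx : 0 ≤ x) (hxy : x ≤ y) : Qr x ≤ Qr y :=
  Real.sqrt_le_sqrt (mul_le_mul hxy (Real.sqrt_le_sqrt hxy) (Real.sqrt_nonneg x) (by linarith))

lemma Qr_pos {x : ℝ} (hx : 0 < x) : 0 < Qr x :=
  Real.sqrt_pos.mpr (mul_pos hx (Real.sqrt_pos.mpr hx))

lemma sqrt_cube (a : ℝ) (ha : 0 ≤ a) : Real.sqrt (a^3) = a * Real.sqrt a := by
  rw [show a^3 = (a*a)*a by ring, Real.sqrt_mul (by positivity), Real.sqrt_mul_self ha]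

lemma Qr_prod_ge {k t : ℕ} (hk : 1 ≤ k) (ht : 1 ≤ t) :
    (k:ℝ) * Real.sqrt k * ((t:ℝ) * Real.sqrt t) ≤ Qr ((k:ℝ)^2 * (t:ℝ)^3) := by
  have hk0 : (0:ℝ) ≤ k := Nat.cast_nonneg k
  have ht0 : (0:ℝ) ≤ t := Nat.cast_nonneg t
  have ht1 : (1:ℝ) ≤ t := by exact_mod_cast ht
  have hst1 : (1:ℝ) ≤ Real.sqrt t := by
    rw [show (1:ℝ) = Real.sqrt 1 from (Real.sqrt_one).symm]
    exact Real.sqrt_le_sqrt ht1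
  have h1 : ((k:ℝ)*t)^3 ≤ (k:ℝ)^2 * t^3 * Real.sqrt ((k:ℝ)^2 * t^3) := by
    have hs : Real.sqrt ((k:ℝ)^2 * t^3) = k * (t * Real.sqrt t) := by
      rw [Real.sqrt_mul (by positivity), Real.sqrt_sq hk0, sqrt_cube _ ht0]
    rw [hs, show (k:ℝ)^2*(t:ℝ)^3*((k:ℝ)*((t:ℝ)*Real.sqrt t)) = (((k:ℝ)*t)^3)*((t:ℝ)*Real.sqrt t) by ring]
    have h4 : (1:ℝ) ≤ (t:ℝ) * Real.sqrt t := by nlinarith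
    exact le_mul_of_one_le_right (by positivity) h4
  calc (k:ℝ) * Real.sqrt k * ((t:ℝ) * Real.sqrt t)
      = Real.sqrt ((k:ℝ)^3) * Real.sqrt ((t:ℝ)^3) := by rw [sqrt_cube _ hk0, sqrt_cube _ ht0]
    _ = Real.sqrt (((k:ℝ)*t)^3) := by rw [← Real.sqrt_mul (by positivity)]; ring_nf
    _ ≤ Qr ((k:ℝ)^2 * (t:ℝ)^3) := Real.sqrt_le_sqrt h1

lemma inv_Qr_le {k t : ℕ} (hk : k ≠ 0) (ht : t ≠ 0) :
    1 / Qr ((k^2 * t^3 : ℕ) : ℝ) ≤ w k * w t := by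
  have h1 : ((k^2 * t^3 : ℕ) : ℝ) = (k:ℝ)^2 * (t:ℝ)^3 := by push_cast; ring
  rw [h1, w, w, div_mul_div_comm, one_mul]
  have hpos : (0:ℝ) < (k:ℝ) * Real.sqrt k * ((t:ℝ) * Real.sqrt t) := by
    have : (0:ℝ) < k := by exact_mod_cast Nat.pos_of_ne_zero hk
    have : (0:ℝ) < t := by exact_mod_cast Nat.pos_of_ne_zero ht
    positivity
  exact one_div_le_one_div_of_le hpos (Qr_prod_ge (Nat.one_le_iff_ne_zero.mpr hk) (Nat.one_le_iff_ne_zero.mpr ht))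

lemma nat_eq_rt4_mul_Qr (d : ℕ) : (d:ℝ) = Real.sqrt (Real.sqrt d) * Qr d := by
  have h0 : (0:ℝ) ≤ d := Nat.cast_nonneg d
  rw [Qr, ← Real.sqrt_mul (Real.sqrt_nonneg _),
    show Real.sqrt (d:ℝ) * ((d:ℝ) * Real.sqrt d) = (Real.sqrt d * Real.sqrt d) * d by ring,
    Real.mul_self_sqrt h0, Real.sqrt_mul_self h0]

lemma sum_inv_Qr_le (S : Finset ℕ)
    (hS : ∀ d ∈ S, ∃ k t : ℕ, k ≠ 0 ∧ t ≠ 0 ∧ d = k^2 * t^3) :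
    ∑ d ∈ S, 1 / Qr d ≤ 9 := by
  classical
  set e : ℕ → ℕ × ℕ := fun d =>
    if h : ∃ k t : ℕ, k ≠ 0 ∧ t ≠ 0 ∧ d = k^2 * t^3 then (h.choose, h.choose_spec.choose)
    else (1,1) with he
  have hspec : ∀ d ∈ S, (e d).1 ≠ 0 ∧ (e d).2 ≠ 0 ∧ d = (e d).1^2 * (e d).2^3 := by
    intro d hd
    have h := hS d hd
    simp only [he, dif_pos h]
    exact ⟨h.choose_spec.choose_spec.1, h.choose_spec.choose_spec.2.1,
      h.choose_spec.choose_spec.2.2⟩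
  set B := S.sup (_root_.id : ℕ → ℕ) with hB
  have himg : ∀ d ∈ S, e d ∈ Finset.Icc 1 B ×ˢ Finset.Icc 1 B := by
    intro d hd
    obtain ⟨hk, ht, hd'⟩ := hspec d hd
    have hdB : d ≤ B := Finset.le_sup (f := _root_.id) hd
    have hk1 : 1 ≤ (e d).1 := Nat.one_le_iff_ne_zero.mpr hk
    have ht1 : 1 ≤ (e d).2 := Nat.one_le_iff_ne_zero.mpr ht
    have h1 : (e d).1 ≤ d := by
      conv_rhs => rw [hd']
      calc (e d).1 ≤ (e d).1^2 := Nat.le_self_pow (by norm_num) _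
      _ ≤ _ := Nat.le_mul_of_pos_right _ (pow_pos (Nat.pos_of_ne_zero ht) 3)
    have h2 : (e d).2 ≤ d := by
      conv_rhs => rw [hd']
      calc (e d).2 ≤ (e d).2^3 := Nat.le_self_pow (by norm_num) _
      _ ≤ _ := Nat.le_mul_of_pos_left _ (pow_pos (Nat.pos_of_ne_zero hk) 2)
    simp only [Finset.mem_product, Finset.mem_Icc]
    exact ⟨⟨hk1, le_trans h1 hdB⟩, ⟨ht1, le_trans h2 hdB⟩⟩
  have hinj : ∀ x ∈ S, ∀ y ∈ S, e x = e y → x = y := by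
    intro x hx y hy hxy
    rw [(hspec x hx).2.2, (hspec y hy).2.2, hxy]
  calc ∑ d ∈ S, 1 / Qr d
      ≤ ∑ d ∈ S, w (e d).1 * w (e d).2 := by
        apply Finset.sum_le_sum
        intro d hd
        obtain ⟨hk, ht, hd'⟩ := hspec d hd
        have h2 := inv_Qr_le hk ht
        rw [← hd'] at h2
        exact h2
    _ = ∑ x ∈ S.image e, w x.1 * w x.2 := (Finset.sum_image (f := fun x : ℕ × ℕ => w x.1 * w x.2) hinj).symm
    _ ≤ ∑ x ∈ Finset.Icc 1 B ×ˢ Finset.Icc 1 B, w x.1 * w x.2 := by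
        apply Finset.sum_le_sum_of_subset_of_nonneg
        · intro x hx
          obtain ⟨d, hd, rfl⟩ := Finset.mem_image.mp hx
          exact himg d hd
        · intro x _ _
          exact mul_nonneg (w_nonneg _) (w_nonneg _)
    _ = (∑ k ∈ Finset.Icc 1 B, w k) * (∑ t ∈ Finset.Icc 1 B, w t) := by
        rw [Finset.sum_product, Finset.sum_mul_sum]
    _ ≤ 3 * 3 := by
        apply mul_le_mul (sum_w_le B) (sum_w_le B)
          (Finset.sum_nonneg fun k _ => w_nonneg k) (by norm_num)
    _ = 9 := by norm_num

lemma count_eq (p M : ℕ) :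
    ((((Finset.Icc 1 M).filter fun n => p ∣ tdiv n)).card : ℤ)
      = M - ∑ n ∈ Finset.Icc 1 M, fA p n := by
  have h1 : ∑ n ∈ Finset.Icc 1 M, ((1:ℤ) - fA p n)
      = (((Finset.Icc 1 M).filter fun n => p ∣ tdiv n)).card := by
    rw [Finset.card_eq_sum_ones, Finset.sum_filter]
    push_cast
    apply Finset.sum_congr rfl
    intro n _
    rw [fA_apply]
    split <;> norm_num
  have h2 : ∑ n ∈ Finset.Icc 1 M, ((1:ℤ) - fA p n)
      = M - ∑ n ∈ Finset.Icc 1 M, fA p n := by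
    rw [Finset.sum_sub_distrib, Finset.sum_const, Nat.card_Icc]
    simp
  rw [← h1, h2]

lemma divisors_eq_filter {n M : ℕ} (hn : n ∈ Finset.Icc 1 M) :
    n.divisors = (Finset.Icc 1 M).filter (· ∣ n) := by
  rw [Finset.mem_Icc] at hn
  ext d
  simp only [Nat.mem_divisors, Finset.mem_filter, Finset.mem_Icc]
  constructor
  · rintro ⟨hd, hn0⟩
    exact ⟨⟨Nat.pos_of_dvd_of_pos hd (by omega), le_trans (Nat.le_of_dvd (by omega) hd) hn.2⟩, hd⟩
  · rintro ⟨-, hd⟩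
    exact ⟨hd, by omega⟩

lemma swap_sum (p M : ℕ) :
    ∑ n ∈ Finset.Icc 1 M, fA p n
      = ∑ d ∈ Finset.Icc 1 M, hA p d * ((M / d : ℕ) : ℤ) := by
  calc ∑ n ∈ Finset.Icc 1 M, fA p n
      = ∑ n ∈ Finset.Icc 1 M, ∑ d ∈ n.divisors, hA p d := by
        exact Finset.sum_congr rfl fun n _ => (sum_divisors_hA n).symm
    _ = ∑ n ∈ Finset.Icc 1 M, ∑ d ∈ Finset.Icc 1 M, if d ∣ n then hA p d else 0 := by
        apply Finset.sum_congr rfl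
        intro n hn
        rw [divisors_eq_filter hn, Finset.sum_filter]
    _ = ∑ d ∈ Finset.Icc 1 M, ∑ n ∈ Finset.Icc 1 M, if d ∣ n then hA p d else 0 :=
        Finset.sum_comm
    _ = ∑ d ∈ Finset.Icc 1 M, hA p d * ((M / d : ℕ) : ℤ) := by
        apply Finset.sum_congr rfl
        intro d _
        rw [← Finset.sum_filter, Finset.sum_const,
          show Finset.Icc 1 M = Finset.Ioc 0 M from Finset.Icc_add_one_left_eq_Ioc ..,
          Nat.Ioc_filter_dvd_card_eq_div]
        rw [nsmul_eq_mul, mul_comm]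

noncomputable def SP (p M : ℕ) : ℝ := ∑ d ∈ Finset.Icc 1 M, (hA p d : ℝ) / d

lemma abs_hA_real_le {p : ℕ} (hp : p.Prime) {n : ℕ} (hn : n ≠ 0) : |(hA p n : ℝ)| ≤ 1 := by
  have := abs_hA_le hp n hn
  calc |(hA p n : ℝ)| = ((|hA p n| : ℤ) : ℝ) := by push_cast; ring
  _ ≤ 1 := by exact_mod_cast this

lemma floor_div_bounds {M d : ℕ} (hd : 1 ≤ d) :
    ((M / d : ℕ) : ℝ) ≤ (M : ℝ) / d ∧ (M : ℝ) / d ≤ ((M / d : ℕ) : ℝ) + 1 := by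
  have hd0 : (0:ℝ) < d := by exact_mod_cast hd
  have h1 := Nat.div_mul_le_self M d
  have h2 : M < d * (M / d) + d := by
    have := Nat.div_add_mod M d
    have := Nat.mod_lt M (show 0 < d by omega)
    omega
  constructor
  · rw [le_div_iff₀ hd0]; exact_mod_cast h1
  · rw [div_le_iff₀ hd0]
    have : (M:ℝ) < (d:ℝ) * ((M/d : ℕ):ℝ) + d := by exact_mod_cast h2
    nlinarith

lemma powerful_filter_decomp {p : ℕ} (hp : p.Prime) (hodd : Odd p) {M : ℕ} :
    ∀ d ∈ (Finset.Icc 1 M).filter (fun d => hA p d ≠ 0),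
      ∃ k t : ℕ, k ≠ 0 ∧ t ≠ 0 ∧ d = k^2 * t^3 := by
  intro d hd
  rw [Finset.mem_filter, Finset.mem_Icc] at hd
  have hd0 : d ≠ 0 := by omega
  exact powerful_decomp hd0 (fun q hq hqd => hA_ne_zero_powerful hp hodd hd0 hd.2 hq hqd)

lemma E1 {p : ℕ} (hp : p.Prime) (hodd : Odd p) (M : ℕ) :
    |∑ d ∈ Finset.Icc 1 M, (hA p d : ℝ) * ((M / d : ℕ) : ℝ) - (M : ℝ) * SP p M|
      ≤ 9 * Qr M := by
  have hQM : 0 ≤ Qr M := Qr_nonneg _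
  have hdiff : ∑ d ∈ Finset.Icc 1 M, (hA p d : ℝ) * ((M / d : ℕ) : ℝ) - (M : ℝ) * SP p M
      = ∑ d ∈ Finset.Icc 1 M, (hA p d : ℝ) * (((M / d : ℕ) : ℝ) - (M : ℝ) / d) := by
    rw [SP, Finset.mul_sum, ← Finset.sum_sub_distrib]
    apply Finset.sum_congr rfl
    intro d _
    ring
  rw [hdiff]
  calc |∑ d ∈ Finset.Icc 1 M, (hA p d : ℝ) * (((M / d : ℕ) : ℝ) - (M : ℝ) / d)|
      ≤ ∑ d ∈ Finset.Icc 1 M, |(hA p d : ℝ) * (((M / d : ℕ) : ℝ) - (M : ℝ) / d)| :=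
        Finset.abs_sum_le_sum_abs _ _
    _ ≤ ∑ d ∈ Finset.Icc 1 M, (if hA p d = 0 then 0 else 1) := by
        apply Finset.sum_le_sum
        intro d hd
        rw [Finset.mem_Icc] at hd
        obtain ⟨hb1, hb2⟩ := floor_div_bounds (M := M) (d := d) hd.1
        rw [abs_mul]
        split
        · next h => simp [h]
        · next h =>
          have ha : |(hA p d : ℝ)| ≤ 1 := abs_hA_real_le hp (by omega)
          have hb : |((M / d : ℕ) : ℝ) - (M : ℝ) / d| ≤ 1 := by
            rw [abs_le]; constructor <;> linarith
          calc |(hA p d : ℝ)| * |((M / d : ℕ) : ℝ) - (M : ℝ) / d| ≤ 1 * 1 :=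
              mul_le_mul ha hb (abs_nonneg _) (by norm_num)
          _ = 1 := by norm_num
    _ = ∑ d ∈ (Finset.Icc 1 M).filter (fun d => hA p d ≠ 0), (1:ℝ) := by
        rw [Finset.sum_filter]
        apply Finset.sum_congr rfl
        intro d _
        split <;> simp_all
    _ ≤ ∑ d ∈ (Finset.Icc 1 M).filter (fun d => hA p d ≠ 0), Qr M * (1 / Qr d) := by
        apply Finset.sum_le_sum
        intro d hd
        rw [Finset.mem_filter, Finset.mem_Icc] at hd
        have hd1 : (1:ℝ) ≤ (d:ℝ) := by exact_mod_cast hd.1.1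
        have hQd : 0 < Qr d := Qr_pos (by linarith)
        have hmono : Qr d ≤ Qr M := Qr_mono (by linarith) (by exact_mod_cast hd.1.2)
        rw [mul_one_div, le_div_iff₀ hQd, one_mul]
        exact hmono
    _ = Qr M * ∑ d ∈ (Finset.Icc 1 M).filter (fun d => hA p d ≠ 0), 1 / Qr d := by
        rw [Finset.mul_sum]
    _ ≤ Qr M * 9 := by
        apply mul_le_mul_of_nonneg_left _ hQM
        exact sum_inv_Qr_le _ (powerful_filter_decomp hp hodd)
    _ = 9 * Qr M := by ring

lemma E2 {p : ℕ} (hp : p.Prime) (hodd : Odd p) {M K : ℕ} (hM : 1 ≤ M) (hMK : M ≤ K) :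
    |SP p K - SP p M| ≤ 9 / Real.sqrt (Real.sqrt M) := by
  have hM0 : (0:ℝ) < M := by exact_mod_cast hM
  have hrt : (0:ℝ) < Real.sqrt (Real.sqrt M) := by positivity
  have hIoc : ∀ J : ℕ, SP p J = ∑ d ∈ Finset.Ioc 0 J, (hA p d : ℝ) / d := by
    intro J
    rw [SP, show Finset.Icc 1 J = Finset.Ioc 0 J from Finset.Icc_add_one_left_eq_Ioc ..]
  have hsub : SP p K - SP p M = ∑ d ∈ Finset.Ioc M K, (hA p d : ℝ) / d := by
    rw [hIoc K, hIoc M, ← Finset.sum_Ioc_consecutive _ (Nat.zero_le M) hMK]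
    ring
  rw [hsub]
  calc |∑ d ∈ Finset.Ioc M K, (hA p d : ℝ) / d|
      ≤ ∑ d ∈ Finset.Ioc M K, |(hA p d : ℝ) / d| := Finset.abs_sum_le_sum_abs _ _
    _ ≤ ∑ d ∈ Finset.Ioc M K, (if hA p d = 0 then 0 else (1:ℝ)/d) := by
        apply Finset.sum_le_sum
        intro d hd
        rw [Finset.mem_Ioc] at hd
        have hd0 : (0:ℝ) < d := by
          have : M < d := hd.1; exact_mod_cast by omega
        rw [abs_div, abs_of_pos hd0]
        split
        · next h => simp [h]
        · next h =>
          gcongr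
          exact abs_hA_real_le hp (by omega)
    _ = ∑ d ∈ (Finset.Ioc M K).filter (fun d => hA p d ≠ 0), (1:ℝ)/d := by
        rw [Finset.sum_filter]
        apply Finset.sum_congr rfl
        intro d _
        split <;> simp_all
    _ ≤ ∑ d ∈ (Finset.Ioc M K).filter (fun d => hA p d ≠ 0),
          (1 / Real.sqrt (Real.sqrt M)) * (1 / Qr d) := by
        apply Finset.sum_le_sum
        intro d hd
        rw [Finset.mem_filter, Finset.mem_Ioc] at hd
        have hdM : (M:ℝ) ≤ d := by exact_mod_cast le_of_lt hd.1.1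
        have hd1 : (0:ℝ) < d := by linarith
        have hQd : 0 < Qr d := Qr_pos hd1
        rw [div_mul_div_comm, one_mul]
        apply one_div_le_one_div_of_le (by positivity)
        calc Real.sqrt (Real.sqrt M) * Qr d ≤ Real.sqrt (Real.sqrt d) * Qr d := by
              have : Real.sqrt (Real.sqrt (M:ℝ)) ≤ Real.sqrt (Real.sqrt (d:ℝ)) :=
                Real.sqrt_le_sqrt (Real.sqrt_le_sqrt hdM)
              exact mul_le_mul_of_nonneg_right this (le_of_lt hQd)
        _ = (d:ℝ) := (nat_eq_rt4_mul_Qr d).symm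
    _ = (1 / Real.sqrt (Real.sqrt M)) *
          ∑ d ∈ (Finset.Ioc M K).filter (fun d => hA p d ≠ 0), 1 / Qr d := by
        rw [Finset.mul_sum]
    _ ≤ (1 / Real.sqrt (Real.sqrt M)) * 9 := by
        apply mul_le_mul_of_nonneg_left _ (by positivity)
        apply sum_inv_Qr_le
        intro d hd
        rw [Finset.mem_filter, Finset.mem_Ioc] at hd
        have hd0 : d ≠ 0 := by omega
        exact powerful_decomp hd0 (fun q hq hqd => hA_ne_zero_powerful hp hodd hd0 hd.2 hq hqd)
    _ = 9 / Real.sqrt (Real.sqrt M) := by ring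

lemma rt4_pow4 (m : ℕ) : Real.sqrt (Real.sqrt ((m:ℝ)^4)) = m := by
  rw [show ((m:ℝ)^4) = ((m:ℝ)^2)^2 by ring, Real.sqrt_sq (by positivity),
    Real.sqrt_sq (Nat.cast_nonneg m)]

lemma exists_limit {p : ℕ} (hp : p.Prime) (hodd : Odd p) :
    ∃ L : ℝ, (∀ M : ℕ, 1 ≤ M → |SP p M - L| ≤ 9 / Real.sqrt (Real.sqrt M)) ∧ |L| ≤ 10 := by
  have hcauchy : CauchySeq (SP p) := by
    rw [Metric.cauchySeq_iff']
    intro ε hε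
    set m : ℕ := ⌈(9:ℝ)/ε⌉₊ + 1 with hm
    have hm9 : (9:ℝ)/ε < m := by
      calc (9:ℝ)/ε ≤ ⌈(9:ℝ)/ε⌉₊ := Nat.le_ceil _
      _ < m := by exact_mod_cast Nat.lt_succ_self _
    have hm0 : 0 < m := Nat.succ_pos _
    have hm0' : (0:ℝ) < m := by exact_mod_cast hm0
    refine ⟨m^4, fun n hn => ?_⟩
    have hN1 : 1 ≤ m^4 := Nat.one_le_iff_ne_zero.mpr (by positivity)
    have hE := E2 hp hodd hN1 hn
    rw [Real.dist_eq]
    have hcast : ((m^4 : ℕ) : ℝ) = ((m:ℝ))^4 := by push_cast; ring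
    rw [hcast, rt4_pow4] at hE
    calc |SP p n - SP p (m^4)| ≤ 9 / m := hE
    _ < ε := by
      rw [div_lt_iff₀ hm0']
      rw [div_lt_iff₀ hε] at hm9
      linarith
  obtain ⟨L, hL⟩ := cauchySeq_tendsto_of_complete hcauchy
  have hbound : ∀ M : ℕ, 1 ≤ M → |SP p M - L| ≤ 9 / Real.sqrt (Real.sqrt M) := by
    intro M hM
    have htend : Filter.Tendsto (fun K => |SP p K - SP p M|) Filter.atTop (nhds |L - SP p M|) :=
      ((hL.sub tendsto_const_nhds).abs)
    have hev : ∀ᶠ K in Filter.atTop, |SP p K - SP p M| ≤ 9 / Real.sqrt (Real.sqrt M) :=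
      Filter.eventually_atTop.mpr ⟨M, fun K hK => E2 hp hodd hM hK⟩
    have := le_of_tendsto htend hev
    rwa [abs_sub_comm]
  refine ⟨L, hbound, ?_⟩
  have hSP1 : SP p 1 = 1 := by
    rw [SP]
    simp [(hA_mult hp).1]
  have hb := hbound 1 le_rfl
  rw [hSP1] at hb
  simp only [Nat.cast_one, Real.sqrt_one] at hb
  rw [abs_sub_comm] at hb
  calc |L| = |(L - 1) + 1| := by ring_nf
  _ ≤ |L - 1| + |(1:ℝ)| := abs_add_le _ _
  _ ≤ 9/1 + |(1:ℝ)| := by linarith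
  
  _ = 10 := by norm_num

lemma half_sqrt {x : ℝ} (hx : 0 ≤ x) : Real.sqrt x / 2 ≤ Real.sqrt (x/2) := by
  have h2 : Real.sqrt 2 ≤ 2 := by
    nlinarith [Real.sq_sqrt (show (0:ℝ) ≤ 2 by norm_num), Real.sqrt_nonneg 2]
  have h2' : 0 < Real.sqrt 2 := Real.sqrt_pos.mpr (by norm_num)
  rw [show x / 2 = x / 2 from rfl, Real.sqrt_div hx 2]
  apply div_le_div_of_nonneg_left (Real.sqrt_nonneg x) h2' h2

lemma real_eq_rt4_mul_Qr {x : ℝ} (hx : 0 ≤ x) : x = Real.sqrt (Real.sqrt x) * Qr x := by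
  rw [Qr, ← Real.sqrt_mul (Real.sqrt_nonneg _),
    show Real.sqrt x * (x * Real.sqrt x) = (Real.sqrt x * Real.sqrt x) * x by ring,
    Real.mul_self_sqrt hx, Real.sqrt_mul_self hx]

lemma Qr_one : Qr 1 = 1 := by
  rw [Qr, Real.sqrt_one, mul_one, Real.sqrt_one]

theorem stmt16 :
    ∃ C : ℝ, 0 < C ∧ ∀ p : ℕ, p.Prime → Odd p → ∃ c : ℝ, ∀ N : ℝ, 2 ≤ N →
      |(((Finset.Icc 1 ⌊N⌋₊).filter (fun n => p ∣ tdiv n)).card : ℝ) - c * N| ≤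
        C * N / Real.log N := by
  refine ⟨200, by norm_num, ?_⟩
  intro p hp hodd
  obtain ⟨L, hbound, hL10⟩ := exists_limit hp hodd
  refine ⟨1 - L, ?_⟩
  intro N hN
  set M := ⌊N⌋₊ with hMdef
  have hM2 : 2 ≤ M := Nat.le_floor (by exact_mod_cast hN)
  have hM1 : 1 ≤ M := by omega
  have hN0 : (0:ℝ) < N := by linarith
  have hMN : (M:ℝ) ≤ N := Nat.floor_le (by linarith)
  have hNM1 : N < (M:ℝ) + 1 := Nat.lt_floor_add_one N
  have hM0 : (0:ℝ) < M := by exact_mod_cast hM1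
  have hlog : 0 < Real.log N := Real.log_pos (by linarith)
  -- the count as a real number
  have hcount : (((Finset.Icc 1 M).filter (fun n => p ∣ tdiv n)).card : ℝ)
      = (M:ℝ) - ∑ d ∈ Finset.Icc 1 M, (hA p d : ℝ) * ((M / d : ℕ) : ℝ) := by
    have h1 := count_eq p M
    rw [swap_sum] at h1
    have := congrArg (fun z : ℤ => (z : ℝ)) h1
    push_cast at this
    convert this using 2
    simp only [← Int.natCast_div, Int.cast_natCast]
  set T := ∑ d ∈ Finset.Icc 1 M, (hA p d : ℝ) * ((M / d : ℕ) : ℝ) with hT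
  have hE1 := E1 hp hodd M
  rw [← hT] at hE1
  have hSPL := hbound M hM1
  -- basic sqrt facts
  have hrtM : (0:ℝ) < Real.sqrt (Real.sqrt M) := by positivity
  have hrtM1 : (1:ℝ) ≤ Real.sqrt (Real.sqrt M) := by
    rw [show (1:ℝ) = Real.sqrt (Real.sqrt 1) by rw [Real.sqrt_one, Real.sqrt_one]]
    exact Real.sqrt_le_sqrt (Real.sqrt_le_sqrt (by exact_mod_cast hM1))
  have hSPb : |SP p M| ≤ 19 := by
    have h9 : 9 / Real.sqrt (Real.sqrt M) ≤ 9 := by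
      rw [div_le_iff₀ hrtM]; nlinarith
    calc |SP p M| = |(SP p M - L) + L| := by ring_nf
    _ ≤ |SP p M - L| + |L| := abs_add_le _ _
    _ ≤ 9 + 10 := by linarith
    _ = 19 := by norm_num
  -- √√M ≥ √√N / 2
  have hhalf : Real.sqrt (Real.sqrt N) / 2 ≤ Real.sqrt (Real.sqrt M) := by
    have h1 : N / 2 ≤ (M:ℝ) := by linarith
    have h2 : Real.sqrt (N/2) ≤ Real.sqrt M := Real.sqrt_le_sqrt h1
    have h3 : Real.sqrt N / 2 ≤ Real.sqrt (N/2) := half_sqrt (le_of_lt hN0)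
    have h4 : Real.sqrt (Real.sqrt N / 2) ≤ Real.sqrt (Real.sqrt M) :=
      Real.sqrt_le_sqrt (le_trans h3 h2)
    have h5 : Real.sqrt (Real.sqrt N) / 2 ≤ Real.sqrt (Real.sqrt N / 2) :=
      half_sqrt (Real.sqrt_nonneg N)
    linarith
  have hQrN1 : 1 ≤ Qr N := by
    rw [← Qr_one]
    exact Qr_mono (by norm_num) (by linarith)
  have hQrMN : Qr (M:ℝ) ≤ Qr N := Qr_mono (le_of_lt hM0) hMN
  have hNQr : N / Real.sqrt (Real.sqrt N) = Qr N := by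
    rw [div_eq_iff (ne_of_gt (show (0:ℝ) < Real.sqrt (Real.sqrt N) by positivity))]
    rw [mul_comm]
    exact real_eq_rt4_mul_Qr (le_of_lt hN0)
  -- main error bound
  have hmain : |(((Finset.Icc 1 M).filter (fun n => p ∣ tdiv n)).card : ℝ) - (1 - L) * N|
      ≤ 47 * Qr N := by
    rw [hcount]
    have hident2 : (M:ℝ) - T - (1 - L) * N
        = ((M:ℝ) - N) * (1 - SP p M) + N * (L - SP p M) + ((M:ℝ) * SP p M - T) := by ring
    rw [hident2]
    have e1 : |((M:ℝ) - N) * (1 - SP p M)| ≤ 1 * 20 := by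
      rw [abs_mul]
      apply mul_le_mul
      · rw [abs_le]; constructor <;> linarith
      · calc |1 - SP p M| ≤ |(1:ℝ)| + |SP p M| := abs_sub _ _
        _ ≤ 1 + 19 := by rw [abs_one]; linarith
        _ = 20 := by norm_num
      · exact abs_nonneg _
      · norm_num
    have e2 : |N * (L - SP p M)| ≤ N * (9 / Real.sqrt (Real.sqrt M)) := by
      rw [abs_mul, abs_of_pos hN0, abs_sub_comm]
      exact mul_le_mul_of_nonneg_left hSPL (le_of_lt hN0)
    have e2' : N * (9 / Real.sqrt (Real.sqrt M)) ≤ 18 * Qr N := by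
      rw [mul_div_assoc']
      rw [div_le_iff₀ hrtM]
      have : N * 9 = 9 * N := by ring
      calc N * 9 = 9 * N := by ring
      _ = 9 * (N / Real.sqrt (Real.sqrt N)) * Real.sqrt (Real.sqrt N) := by
          field_simp
      _ = 9 * Qr N * Real.sqrt (Real.sqrt N) := by rw [hNQr]
      _ = 18 * Qr N * (Real.sqrt (Real.sqrt N) / 2) := by ring
      _ ≤ 18 * Qr N * Real.sqrt (Real.sqrt M) := by
          apply mul_le_mul_of_nonneg_left hhalf
          positivity
    calc |((M:ℝ) - N) * (1 - SP p M) + N * (L - SP p M) + ((M:ℝ) * SP p M - T)|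
        ≤ |((M:ℝ) - N) * (1 - SP p M)| + |N * (L - SP p M)| + |(M:ℝ) * SP p M - T| := by
          exact le_trans (abs_add_le _ _) (by linarith [abs_add_le (((M:ℝ) - N) * (1 - SP p M)) (N * (L - SP p M))])
      _ ≤ 1 * 20 + 18 * Qr N + 9 * Qr (M:ℝ) := by
          have := abs_sub_comm ((M:ℝ) * SP p M) T
          rw [abs_sub_comm] at hE1
          linarith
      _ ≤ 20 * Qr N + 18 * Qr N + 9 * Qr N := by
          have h20 : (20:ℝ) ≤ 20 * Qr N := by linarith
          have h9 : 9 * Qr (M:ℝ) ≤ 9 * Qr N := by linarith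
          linarith
      _ = 47 * Qr N := by ring
  -- log bound: log N ≤ 4 √√N
  have hlog4 : Real.log N ≤ 4 * Real.sqrt (Real.sqrt N) := by
    have h1 : Real.log N = 4 * Real.log (Real.sqrt (Real.sqrt N)) := by
      rw [Real.log_sqrt (Real.sqrt_nonneg N), Real.log_sqrt (le_of_lt hN0)]
      ring
    have h2 : Real.log (Real.sqrt (Real.sqrt N)) ≤ Real.sqrt (Real.sqrt N) - 1 :=
      Real.log_le_sub_one_of_pos (by positivity)
    rw [h1]
    nlinarith
  -- conclude
  calc |(((Finset.Icc 1 M).filter (fun n => p ∣ tdiv n)).card : ℝ) - (1 - L) * N|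
      ≤ 47 * Qr N := hmain
    _ ≤ 200 * N / Real.log N := by
      rw [le_div_iff₀ hlog]
      have hQrpos : 0 < Qr N := by linarith
      calc 47 * Qr N * Real.log N ≤ 47 * Qr N * (4 * Real.sqrt (Real.sqrt N)) := by
            apply mul_le_mul_of_nonneg_left hlog4
            positivity
        _ = 188 * (Real.sqrt (Real.sqrt N) * Qr N) := by ring
        _ = 188 * N := by rw [← real_eq_rt4_mul_Qr (le_of_lt hN0)]
        _ ≤ 200 * N := by linarith
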